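/- (Monotonicity along rays) Let K satisfy the kernel assumption, δ > 0, let a_1, …, a_n ∈ ℝ^p be fixed vectors and b_1, …, b_n ≥ 0 fixed scalars, and let x_0 ∈ ℝ^p with ‖x_0‖₂ > 0. Then the function h_n(u) = (1/u²) · (1/n) Σ_{i=1}^n U_1(u·x_0; a_i, b_i) = (1/n) Σ_{i=1}^n 2 (a_iᵀx_0)² l'_δ( u² (a_iᵀx_0)² − b_i ) is monotone increasing (nondecreasing) on (0, +∞). -/

import Mathlib

open MeasureTheory ProbabilityTheory
open scoped BigOperators RealInnerProductSpace Gradient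

/-- The kernel assumption: `K` is a nonnegative, symmetric kernel integrating to one,
bounded, Lipschitz, positive at zero, and `x ↦ x * K x` is bounded, Lipschitz and
absolutely integrable. -/
structure IsGoodKernel (K : ℝ → ℝ) : Prop where
  nonneg : ∀ x, 0 ≤ K x
  symm : ∀ x, K x = K (-x)
  integral_one : (∫ x, K x) = 1
  bounded : ∃ B, ∀ x, |K x| ≤ B
  lipschitz : ∃ L : NNReal, LipschitzWith L K
  pos_at_zero : 0 < K 0
  bar_bounded : ∃ B, ∀ x, |x * K x| ≤ B
  bar_lipschitz : ∃ L : NNReal, LipschitzWith L (fun x => x * K x)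
  bar_integrable : Integrable (fun x => x * K x)

/-- The scaled kernel `K_δ(x) = (1/δ) K(x/δ)`. -/
noncomputable def scaledKernel (K : ℝ → ℝ) (δ : ℝ) (x : ℝ) : ℝ := (1 / δ) * K (x / δ)

/-- The convolution-type smoothed loss `l_δ(x) = ∫ |y| K_δ(x - y) dy`. -/
noncomputable def smoothedLoss (K : ℝ → ℝ) (δ : ℝ) (x : ℝ) : ℝ :=
  ∫ y, |y| * scaledKernel K δ (x - y)

/-- The smoothed empirical objective
`F_δ(x) = (1/n) ∑ᵢ l_δ((aᵢᵀ x)² - bᵢ)`. -/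
noncomputable def smoothedObj {p n : ℕ} (K : ℝ → ℝ) (δ : ℝ)
    (a : Fin n → EuclideanSpace ℝ (Fin p)) (b : Fin n → ℝ)
    (x : EuclideanSpace ℝ (Fin p)) : ℝ :=
  (n : ℝ)⁻¹ * ∑ i, smoothedLoss K δ ((⟪a i, x⟫) ^ 2 - b i)

/-- `Δ(x) = min(‖x - x⋆‖, ‖x + x⋆‖)`, the distance to the pair of true signals. -/
noncomputable def distSig {p : ℕ} (xs x : EuclideanSpace ℝ (Fin p)) : ℝ :=
  min ‖x - xs‖ ‖x + xs‖

/-- The standard Gaussian measure `N(0, I_p)` on `EuclideanSpace ℝ (Fin p)`. -/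
noncomputable def stdGaussian (p : ℕ) : Measure (EuclideanSpace ℝ (Fin p)) :=
  Measure.map (MeasurableEquiv.toLp 2 (Fin p → ℝ))
    (Measure.pi fun _ => gaussianReal 0 1)

/-- `a` is a family of i.i.d. standard Gaussian random vectors in `ℝ^p`. -/
def IsIIDStdGaussian {Ω : Type*} [MeasurableSpace Ω] (P : Measure Ω) {p : ℕ} {ι : Type*}
    (a : ι → Ω → EuclideanSpace ℝ (Fin p)) : Prop :=
  (∀ i, Measurable (a i)) ∧
  iIndepFun a P ∧
  (∀ i, Measure.map (a i) P = stdGaussian p)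


/-- `U₁(x; a, b) = 2 (aᵀx)² l'_δ((aᵀx)² - b)`. -/
noncomputable def U1 {p : ℕ} (K : ℝ → ℝ) (δ : ℝ)
    (x a : EuclideanSpace ℝ (Fin p)) (b : ℝ) : ℝ :=
  2 * (⟪a, x⟫) ^ 2 * deriv (smoothedLoss K δ) ((⟪a, x⟫) ^ 2 - b)

/-- `U₂(x; a, b) = (aᵀx⋆)² (2 l'_δ((aᵀx)² - b) + 4 (aᵀx)² l''_δ((aᵀx)² - b))`. -/
noncomputable def U2 {p : ℕ} (K : ℝ → ℝ) (δ : ℝ) (xs : EuclideanSpace ℝ (Fin p))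
    (x a : EuclideanSpace ℝ (Fin p)) (b : ℝ) : ℝ :=
  (⟪a, xs⟫) ^ 2 * (2 * deriv (smoothedLoss K δ) ((⟪a, x⟫) ^ 2 - b) +
    4 * (⟪a, x⟫) ^ 2 * deriv (deriv (smoothedLoss K δ)) ((⟪a, x⟫) ^ 2 - b))

/-- `U₃(x; a, b) = 2 (aᵀx⋆)(aᵀx) l'_δ((aᵀx)² - b)`. -/
noncomputable def U3 {p : ℕ} (K : ℝ → ℝ) (δ : ℝ) (xs : EuclideanSpace ℝ (Fin p))
    (x a : EuclideanSpace ℝ (Fin p)) (b : ℝ) : ℝ :=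
  2 * ⟪a, xs⟫ * ⟪a, x⟫ * deriv (smoothedLoss K δ) ((⟪a, x⟫) ^ 2 - b)


lemma my_sign_monotone : Monotone Real.sign := by
  intro s t h
  rcases lt_trichotomy s 0 with hs | hs | hs
  · rw [Real.sign_of_neg hs]
    rcases Real.sign_apply_eq t with h' | h' | h' <;> rw [h'] <;> norm_num
  · subst hs
    rw [Real.sign_zero]
    rcases lt_or_eq_of_le h with ht | ht
    · rw [Real.sign_of_pos ht]; norm_num
    · rw [← ht, Real.sign_zero]
  · rw [Real.sign_of_pos hs, Real.sign_of_pos (lt_of_lt_of_le hs h)]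

lemma my_measurable_sign : Measurable Real.sign := by
  unfold Real.sign
  exact Measurable.ite (measurableSet_lt measurable_id measurable_const) measurable_const
    (Measurable.ite (measurableSet_lt measurable_const measurable_id) measurable_const
      measurable_const)

section Core
open Metric

variable {K : ℝ → ℝ} {δ : ℝ}

lemma K_cont (hKl : ∃ L : NNReal, LipschitzWith L K) : Continuous K :=
  hKl.choose_spec.continuous

lemma K_int (hKl : ∃ L : NNReal, LipschitzWith L K) (hKi : (∫ x, K x) = 1) :
    Integrable K := by
  by_contra h
  rw [integral_undef h] at hKi
  norm_num at hKi

lemma scaled_cont (hKl : ∃ L : NNReal, LipschitzWith L K) :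
    Continuous (scaledKernel K δ) :=
  continuous_const.mul ((K_cont hKl).comp (continuous_id.div_const δ))

lemma scaled_nonneg (hKn : ∀ x, 0 ≤ K x) (hδ : 0 < δ) (x : ℝ) :
    0 ≤ scaledKernel K δ x :=
  mul_nonneg (by positivity) (hKn _)

lemma scaled_int (hKl : ∃ L : NNReal, LipschitzWith L K) (hKi : (∫ x, K x) = 1)
    (hδ : 0 < δ) : Integrable (scaledKernel K δ) :=
  ((K_int hKl hKi).comp_div hδ.ne').const_mul _

lemma bar_scaled_int (hKn : ∀ x, 0 ≤ K x) (hKb : Integrable (fun x => x * K x))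
    (hδ : 0 < δ) : Integrable (fun z => |z| * scaledKernel K δ z) := by
  have h1 : Integrable (fun z : ℝ => z / δ * K (z / δ)) := hKb.comp_div hδ.ne'
  have h2 := h1.abs
  refine h2.congr ?_
  filter_upwards with z
  rw [abs_mul, abs_div, abs_of_pos hδ, abs_of_nonneg (hKn _), scaledKernel]
  ring

lemma integrand_int (hKl : ∃ L : NNReal, LipschitzWith L K) (hKn : ∀ x, 0 ≤ K x)
    (hKi : (∫ x, K x) = 1) (hKb : Integrable (fun x => x * K x)) (hδ : 0 < δ)
    (x : ℝ) : Integrable (fun z => |x - z| * scaledKernel K δ z) := by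
  refine Integrable.mono (((scaled_int hKl hKi hδ).const_mul |x|).add
    (bar_scaled_int hKn hKb hδ))
    (((continuous_const.sub continuous_id).abs.mul (scaled_cont hKl)).aestronglyMeasurable) ?_
  filter_upwards with z
  have hz := scaled_nonneg (K := K) (δ := δ) hKn hδ z
  simp only [Pi.add_apply, Real.norm_eq_abs]
  rw [abs_mul, abs_abs, abs_of_nonneg hz,
    abs_of_nonneg (by positivity : (0:ℝ) ≤ |x| * scaledKernel K δ z + |z| * scaledKernel K δ z)]
  have h1 : |x - z| ≤ |x| + |z| := abs_sub x z
  nlinarith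

lemma smoothedLoss_eq (x : ℝ) :
    smoothedLoss K δ x = ∫ z, |x - z| * scaledKernel K δ z := by
  rw [smoothedLoss, ← integral_sub_left_eq_self (fun z => |x - z| * scaledKernel K δ z) volume x]
  congr 1
  funext y
  rw [sub_sub_cancel]

lemma key_deriv (hKl : ∃ L : NNReal, LipschitzWith L K) (hKn : ∀ x, 0 ≤ K x)
    (hKi : (∫ x, K x) = 1) (hKb : Integrable (fun x => x * K x)) (hδ : 0 < δ)
    (x₀ : ℝ) :
    Integrable (fun z => Real.sign (x₀ - z) * scaledKernel K δ z) ∧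
    HasDerivAt (smoothedLoss K δ)
      (∫ z, Real.sign (x₀ - z) * scaledKernel K δ z) x₀ := by
  have heq : smoothedLoss K δ = fun x => ∫ z, |x - z| * scaledKernel K δ z :=
    funext smoothedLoss_eq
  rw [heq]
  refine hasDerivAt_integral_of_dominated_loc_of_lip (bound := fun z => scaledKernel K δ z)
    (s := Metric.ball x₀ 1) (Metric.ball_mem_nhds x₀ one_pos) ?_ (integrand_int hKl hKn hKi hKb hδ x₀) ?_ ?_
    (scaled_int hKl hKi hδ) ?_
  · filter_upwards with x
    exact (((continuous_const.sub continuous_id).abs.mul (scaled_cont hKl)).aestronglyMeasurable)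
  · exact ((my_measurable_sign.comp (measurable_const.sub measurable_id)).mul
      (scaled_cont hKl).measurable).aestronglyMeasurable
  · filter_upwards with z
    refine LipschitzWith.lipschitzOnWith ?_
    refine LipschitzWith.of_dist_le_mul fun x y => ?_
    rw [Real.dist_eq, Real.dist_eq, ← sub_mul, abs_mul]
    have h1 : abs (|x - z| - |y - z|) ≤ |x - y| := by
      have := abs_abs_sub_abs_le_abs_sub (x - z) (y - z)
      rwa [sub_sub_sub_cancel_right] at this
    have h2 : (Real.nnabs (scaledKernel K δ z) : ℝ) = |scaledKernel K δ z| := by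
      simp [Real.coe_nnabs]
    rw [h2]
    calc abs (|x - z| - |y - z|) * |scaledKernel K δ z| ≤ |x - y| * |scaledKernel K δ z| :=
          mul_le_mul_of_nonneg_right h1 (abs_nonneg _)
      _ = |scaledKernel K δ z| * |x - y| := mul_comm _ _
  · have hae : ∀ᵐ z : ℝ, z ≠ x₀ := by
      rw [ae_iff]
      have : {z : ℝ | ¬ z ≠ x₀} = {x₀} := by ext z; simp
      rw [this]
      exact measure_singleton _
    filter_upwards [hae] with z hz
    rcases lt_or_gt_of_ne hz with h | h
    · rw [Real.sign_of_pos (by linarith : (0:ℝ) < x₀ - z), one_mul]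
      have hd : HasDerivAt (fun x : ℝ => (x - z) * scaledKernel K δ z)
          (scaledKernel K δ z) x₀ := by
        simpa using ((hasDerivAt_id x₀).sub_const z).mul_const (scaledKernel K δ z)
      refine hd.congr_of_eventuallyEq ?_
      filter_upwards [eventually_gt_nhds h] with x hx
      rw [abs_of_pos (by linarith : (0:ℝ) < x - z)]
    · rw [Real.sign_of_neg (by linarith : x₀ - z < 0)]
      have hd : HasDerivAt (fun x : ℝ => (z - x) * scaledKernel K δ z)
          (-1 * scaledKernel K δ z) x₀ := by
        have := ((hasDerivAt_id x₀).const_sub z).mul_const (scaledKernel K δ z)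
        simpa using this
      refine hd.congr_of_eventuallyEq ?_
      filter_upwards [eventually_lt_nhds h] with x hx
      rw [abs_of_neg (by linarith : x - z < 0), neg_sub]

lemma deriv_smoothedLoss_monotone (hKl : ∃ L : NNReal, LipschitzWith L K)
    (hKn : ∀ x, 0 ≤ K x) (hKi : (∫ x, K x) = 1)
    (hKb : Integrable (fun x => x * K x)) (hδ : 0 < δ) :
    Monotone (deriv (smoothedLoss K δ)) := by
  intro x y hxy
  rw [(key_deriv hKl hKn hKi hKb hδ x).2.deriv, (key_deriv hKl hKn hKi hKb hδ y).2.deriv]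
  refine integral_mono (key_deriv hKl hKn hKi hKb hδ x).1 (key_deriv hKl hKn hKi hKb hδ y).1 ?_
  intro z
  exact mul_le_mul_of_nonneg_right (my_sign_monotone (by linarith))
    (scaled_nonneg hKn hδ z)

end Core


/-- Monotonicity along rays. For fixed data, the function
`h_n(u) = (1/n) ∑ᵢ 2 (aᵢᵀx₀)² l'_δ(u² (aᵢᵀx₀)² - bᵢ)` is monotone nondecreasing on
`(0, ∞)`; it equals `(1/u²) (1/n) ∑ᵢ U₁(u x₀; aᵢ, bᵢ)` there. -/

theorem U1_ray_monotone
    {p n : ℕ} (K : ℝ → ℝ) (hK : IsGoodKernel K) (δ : ℝ) (hδ : 0 < δ)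
    (a : Fin n → EuclideanSpace ℝ (Fin p)) (b : Fin n → ℝ) (hb : ∀ i, 0 ≤ b i)
    (x₀ : EuclideanSpace ℝ (Fin p)) (hx₀ : 0 < ‖x₀‖) :
    MonotoneOn (fun u : ℝ =>
      (n : ℝ)⁻¹ * ∑ i, 2 * (⟪a i, x₀⟫) ^ 2 *
        deriv (smoothedLoss K δ) (u ^ 2 * (⟪a i, x₀⟫) ^ 2 - b i)) (Set.Ioi 0) ∧
    ∀ u ∈ Set.Ioi (0 : ℝ),
      (n : ℝ)⁻¹ * ∑ i, 2 * (⟪a i, x₀⟫) ^ 2 *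
          deriv (smoothedLoss K δ) (u ^ 2 * (⟪a i, x₀⟫) ^ 2 - b i) =
        (u ^ 2)⁻¹ * ((n : ℝ)⁻¹ * ∑ i, U1 K δ (u • x₀) (a i) (b i)) := by
  
  constructor
  · intro u hu v hv huv
    have hmono := deriv_smoothedLoss_monotone hK.lipschitz hK.nonneg hK.integral_one
      hK.bar_integrable hδ
    refine mul_le_mul_of_nonneg_left ?_ (by positivity)
    refine Finset.sum_le_sum fun i _ => ?_
    refine mul_le_mul_of_nonneg_left ?_ (by positivity)
    refine hmono ?_
    have hu' : (0:ℝ) < u := hu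
    have h1 : u ^ 2 ≤ v ^ 2 := by nlinarith
    have := mul_le_mul_of_nonneg_right h1 (sq_nonneg (⟪a i, x₀⟫))
    linarith
  · intro u hu
    have hu' : (0:ℝ) < u := hu
    have h2 : ∑ i, U1 K δ (u • x₀) (a i) (b i) =
        u ^ 2 * ∑ i, 2 * (⟪a i, x₀⟫) ^ 2 *
          deriv (smoothedLoss K δ) (u ^ 2 * (⟪a i, x₀⟫) ^ 2 - b i) := by
      rw [Finset.mul_sum]
      refine Finset.sum_congr rfl fun i _ => ?_
      simp only [U1, real_inner_smul_right, mul_pow]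
      ring
    rw [h2]
    field_simp
    simp only [mul_comm (u ^ 2)]
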